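/- arXiv:1607.03848 — 3 statements merged into one kernel-verified Lean document; each statement's English description precedes it below -/
import Mathlib

section
/- Every identifying code in the bi-infinite path ℤ has lower density at least 1/2; equivalently, for every identifying code C ⊆ ℤ and every n ≥ 1, |C ∩ {1, …, 2n}| ≥ n − 1. -/
open Filter

/-- The bi-infinite path: vertex set is the integers, with edges between
consecutive integers. -/
def pathZ : SimpleGraph ℤ where
  Adj a b := (a - b).natAbs = 1
  symm := ⟨by intro a b h; omega⟩
  loopless := ⟨by intro a h; omega⟩

/-- Closed neighborhood N[v]. -/
def closedNbhd {V : Type*} (G : SimpleGraph V) (v : V) : Set V :=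
  {u | u = v ∨ G.Adj u v}

/-- C is an identifying code in G. -/
def IsIdentifyingCode {V : Type*} (G : SimpleGraph V) (C : Set V) : Prop :=
  (∀ v, (closedNbhd G v ∩ C).Nonempty) ∧
  ∀ u v : V, u ≠ v → closedNbhd G u ∩ C ≠ closedNbhd G v ∩ C

/-- Separation of `x+1` and `x+2` forces a code element in `{x, x+3}`. -/
lemma IC.pair_mem {C : Set ℤ} (hC : IsIdentifyingCode pathZ C) (x : ℤ) :
    x ∈ C ∨ x + 3 ∈ C := by
  by_contra h
  push_neg at h
  obtain ⟨hx, hx3⟩ := h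
  apply hC.2 (x+1) (x+2) (by omega)
  ext y
  simp only [closedNbhd, pathZ, Set.mem_inter_iff, Set.mem_setOf_eq]
  constructor
  · rintro ⟨h1, h2⟩
    have hyx : y ≠ x := fun h => hx (h ▸ h2)
    exact ⟨by omega, h2⟩
  · rintro ⟨h1, h2⟩
    have hyx : y ≠ x + 3 := fun h => hx3 (h ▸ h2)
    exact ⟨by omega, h2⟩

lemma IC.three_le {C : Set ℤ} {a b x1 x2 x3 : ℤ} (h1 : x1 ∈ C) (h2 : x2 ∈ C)
    (h3 : x3 ∈ C) (hb1 : a ≤ x1 ∧ x1 ≤ b) (hb2 : a ≤ x2 ∧ x2 ≤ b)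
    (hb3 : a ≤ x3 ∧ x3 ≤ b) (hd : x1 ≠ x2 ∧ x1 ≠ x3 ∧ x2 ≠ x3) :
    3 ≤ (C ∩ Set.Icc a b).ncard := by
  have hsub : ({x1, x2, x3} : Set ℤ) ⊆ C ∩ Set.Icc a b := by
    intro y hy
    simp only [Set.mem_insert_iff, Set.mem_singleton_iff] at hy
    refine ⟨?_, ?_⟩
    · rcases hy with h | h | h <;> subst h <;> assumption
    · simp only [Set.mem_Icc]; rcases hy with h | h | h <;> subst h <;> omega
  have hne : x1 ∉ ({x2, x3} : Set ℤ) := by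
    simp only [Set.mem_insert_iff, Set.mem_singleton_iff]
    push_neg
    exact ⟨hd.1, hd.2.1⟩
  have hcard : ({x1, x2, x3} : Set ℤ).ncard = 3 := by
    rw [Set.ncard_insert_of_notMem hne, Set.ncard_pair hd.2.2]
  calc 3 = ({x1, x2, x3} : Set ℤ).ncard := hcard.symm
    _ ≤ _ := Set.ncard_le_ncard hsub ((Set.finite_Icc a b).inter_of_right C)

lemma IC.six_count {C : Set ℤ} (hp : ∀ x : ℤ, x ∈ C ∨ x + 3 ∈ C) (a : ℤ) :
    3 ≤ (C ∩ Set.Icc a (a + 5)).ncard := by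
  obtain h1 | h1 := hp a <;> obtain h2 | h2 := hp (a+1) <;> obtain h3 | h3 := hp (a+2) <;>
    exact IC.three_le h1 h2 h3 (by omega) (by omega) (by omega) (by omega)

lemma IC.one_le_cnt {C : Set ℤ} (hp : ∀ x : ℤ, x ∈ C ∨ x + 3 ∈ C) {a b : ℤ}
    (h : a + 3 ≤ b) : 1 ≤ (C ∩ Set.Icc a b).ncard := by
  have hfin : (C ∩ Set.Icc a b).Finite := (Set.finite_Icc a b).inter_of_right C
  refine (Set.ncard_pos hfin).mpr ?_
  obtain hx | hx := hp a
  · exact ⟨a, hx, by simp only [Set.mem_Icc]; omega⟩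
  · exact ⟨a + 3, hx, by simp only [Set.mem_Icc]; omega⟩

lemma IC.main_count {C : Set ℤ} (hp : ∀ x : ℤ, x ∈ C ∨ x + 3 ∈ C) :
    ∀ n : ℕ, ∀ a : ℤ, (n : ℤ) - 1 ≤ ((C ∩ Set.Icc a (a + 2*n - 1)).ncard : ℤ) := by
  intro n
  induction n using Nat.strong_induction_on with
  | _ n ih =>
    intro a
    by_cases h4 : 4 ≤ n
    · have key : C ∩ Set.Icc a (a + 2*n - 1) =
          (C ∩ Set.Icc a (a+5)) ∪ (C ∩ Set.Icc (a+6) (a + 2*n - 1)) := by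
        rw [← Set.inter_union_distrib_left]
        congr 1
        ext y
        simp only [Set.mem_Icc, Set.mem_union]
        omega
      have hdisj : Disjoint (C ∩ Set.Icc a (a+5)) (C ∩ Set.Icc (a+6) (a + 2*(n:ℤ) - 1)) := by
        rw [Set.disjoint_left]
        rintro y ⟨-, hy⟩ ⟨-, hy'⟩
        simp only [Set.mem_Icc] at hy hy'
        omega
      rw [key, Set.ncard_union_eq hdisj ((Set.finite_Icc _ _).inter_of_right C)
        ((Set.finite_Icc _ _).inter_of_right C)]
      have h1 := IC.six_count hp a
      have h2 := ih (n - 3) (by omega) (a + 6)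
      rw [show a + 6 + 2*((n - 3 : ℕ) : ℤ) - 1 = a + 2*(n:ℤ) - 1 by
        push_cast [Nat.cast_sub (by omega : 3 ≤ n)]; ring] at h2
      push_cast [Nat.cast_sub (by omega : 3 ≤ n)] at h2 ⊢
      omega
    · interval_cases n
      · have : 0 ≤ ((C ∩ Set.Icc a (a + 2*(0:ℕ) - 1)).ncard : ℤ) := Int.ofNat_nonneg _
        push_cast at this ⊢
        omega
      · have : 0 ≤ ((C ∩ Set.Icc a (a + 2*(1:ℕ) - 1)).ncard : ℤ) := Int.ofNat_nonneg _
        push_cast at this ⊢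
        omega
      · have h1 := IC.one_le_cnt hp (show a + 3 ≤ a + 2*((2:ℕ):ℤ) - 1 by push_cast; omega)
        push_cast at h1 ⊢
        omega
      · have h1 := IC.six_count hp a
        rw [show a + 2*((3:ℕ):ℤ) - 1 = a + 5 by push_cast; ring]
        omega

/-- Every identifying code in the bi-infinite path has lower density at least
1/2; equivalently, it has at least n - 1 elements among {1, ..., 2n}. -/
theorem identifying_code_path_lower_density (C : Set ℤ)
    (hC : IsIdentifyingCode pathZ C) :
    (1 / 2 : ℝ) ≤
      liminf (fun r : ℕ =>
        ((C ∩ Set.Icc (-(r : ℤ)) (r : ℤ)).ncard : ℝ) / (2 * r + 1)) atTop ∧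
    ∀ n : ℕ, 1 ≤ n →
      ((n : ℤ) - 1) ≤ ((C ∩ Set.Icc (1 : ℤ) (2 * n)).ncard : ℤ) := by
  have hp := IC.pair_mem hC
  constructor
  · set f : ℕ → ℝ := fun r =>
      ((C ∩ Set.Icc (-(r : ℤ)) (r : ℤ)).ncard : ℝ) / (2 * r + 1) with hf
    set g : ℕ → ℝ := fun r => ((r : ℝ) - 1) / (2 * r + 1) with hgdef
    have hle : ∀ r, g r ≤ f r := by
      intro r
      have h1 := IC.main_count hp r (-(r : ℤ))
      rw [show -(r:ℤ) + 2*(r:ℤ) - 1 = (r:ℤ) - 1 by ring] at h1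
      have h2 : (C ∩ Set.Icc (-(r:ℤ)) ((r:ℤ) - 1)).ncard ≤
          (C ∩ Set.Icc (-(r:ℤ)) (r:ℤ)).ncard := by
        refine Set.ncard_le_ncard (Set.inter_subset_inter_right C ?_)
          ((Set.finite_Icc _ _).inter_of_right C)
        exact Set.Icc_subset_Icc le_rfl (by omega)
      have h3 : ((r : ℝ) - 1) ≤ ((C ∩ Set.Icc (-(r:ℤ)) (r:ℤ)).ncard : ℝ) := by
        have : ((r:ℤ) - 1) ≤ ((C ∩ Set.Icc (-(r:ℤ)) (r:ℤ)).ncard : ℤ) := by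
          calc ((r:ℤ) - 1) ≤ _ := h1
            _ ≤ _ := by exact_mod_cast h2
        exact_mod_cast this
      have hpos : (0:ℝ) < 2 * r + 1 := by positivity
      exact div_le_div_of_nonneg_right h3 hpos.le
    have hden : Tendsto (fun r : ℕ => (2 * (r:ℝ) + 1)) atTop atTop := by
      apply tendsto_atTop_add_const_right
      exact Tendsto.const_mul_atTop two_pos tendsto_natCast_atTop_atTop
    have hz : Tendsto (fun r : ℕ => (2 * (r:ℝ) + 1)⁻¹) atTop (nhds 0) :=
      hden.inv_tendsto_atTop
    have hg : Tendsto g atTop (nhds (1/2)) := by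
      have h0 : Tendsto (fun r : ℕ => 1/2 - 3/2 * (2 * (r:ℝ) + 1)⁻¹) atTop
          (nhds (1/2 - 3/2 * 0)) := tendsto_const_nhds.sub (hz.const_mul (3/2))
      rw [show (1:ℝ)/2 - 3/2 * 0 = 1/2 by ring] at h0
      refine h0.congr fun r => ?_
      have hne : (2 * (r:ℝ) + 1) ≠ 0 := by positivity
      simp only [hgdef]
      field_simp
      ring
    have hfle : ∀ r : ℕ, f r ≤ 1 := by
      intro r
      have hcard : (Set.Icc (-(r:ℤ)) (r:ℤ)).ncard = 2 * r + 1 := by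
        rw [← Finset.coe_Icc, Set.ncard_coe_finset, Int.card_Icc]
        omega
      have h1 : (C ∩ Set.Icc (-(r:ℤ)) (r:ℤ)).ncard ≤ 2 * r + 1 := by
        rw [← hcard]
        exact Set.ncard_le_ncard Set.inter_subset_right (Set.finite_Icc _ _)
      have hpos : (0:ℝ) < 2 * r + 1 := by positivity
      rw [hf, div_le_one hpos]
      calc ((C ∩ Set.Icc (-(r:ℤ)) (r:ℤ)).ncard : ℝ) ≤ ((2 * r + 1 : ℕ) : ℝ) := by
            exact_mod_cast h1
        _ = 2 * r + 1 := by push_cast; ring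
    have hbg : IsBoundedUnder (· ≥ ·) atTop g := hg.isBoundedUnder_ge
    have hcf : IsCoboundedUnder (· ≥ ·) atTop f :=
      isCoboundedUnder_ge_of_le atTop hfle
    calc (1/2 : ℝ) = liminf g atTop := hg.liminf_eq.symm
      _ ≤ liminf f atTop := liminf_le_liminf (Eventually.of_forall hle) hbg hcf
  · intro n hn
    have h1 := IC.main_count hp n 1
    rw [show (1:ℤ) + 2*(n:ℤ) - 1 = 2*(n:ℤ) by ring] at h1
    exact h1
end

section
/- (Karp's theorem) Let G be a finite strongly connected edge-weighted directed graph with n vertices and fixed source s, and let F_k(v) denote the minimum weight of a walk of length exactly k from s to v (∞ if none exists). Then the minimum cycle mean λ* of G equals min over v ∈ V of max over 0 ≤ k ≤ n−1 of (F_n(v) − F_k(v))/(n − k). -/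
/-- A list of edges is a walk from u to v in a directed multigraph given by
source and target maps. -/
def IsWalkFrom {V E : Type*} (src tgt : E → V) : V → V → List E → Prop
  | u, v, [] => u = v
  | u, v, e :: l => src e = u ∧ IsWalkFrom src tgt (tgt e) v l

/-- F k v: the minimum weight of a walk of length exactly k from s to v
(infinity if no such walk exists), as an extended real number. -/
noncomputable def minWalkWeight {V E : Type*} (src tgt : E → V) (f : E → ℝ)
    (s : V) (k : ℕ) (v : V) : EReal :=
  sInf {w : EReal | ∃ l : List E,
    IsWalkFrom src tgt s v l ∧ l.length = k ∧ w = ((l.map f).sum : EReal)}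

/-- One vertex can reach another along directed edges. -/
def Reaches {V E : Type*} (src tgt : E → V) : V → V → Prop :=
  Relation.ReflTransGen (fun a b => ∃ e : E, src e = a ∧ tgt e = b)

/-- Every vertex can reach every other vertex. -/
def StronglyConnected {V E : Type*} (src tgt : E → V) : Prop :=
  ∀ u v : V, Reaches src tgt u v

/-- A nonempty list of edges forms a closed walk: consecutive edges match up,
cyclically. -/
def IsClosedWalk {V E : Type*} (src tgt : E → V) (l : List E) : Prop :=
  l ≠ [] ∧ ∀ i : Fin l.length,
    tgt (l.get i) =
      src (l.get ⟨(i + 1) % l.length,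
        Nat.mod_lt _ (Nat.lt_of_le_of_lt (Nat.zero_le _) i.2)⟩)

/-- The minimum cycle mean: the infimum over all closed walks of the total
edge weight divided by the number of edges. -/
noncomputable def minCycleMean {V E : Type*} (src tgt : E → V) (f : E → ℝ) :
    EReal :=
  sInf {w : EReal | ∃ l : List E, IsClosedWalk src tgt l ∧
    w = (((l.map f).sum / l.length : ℝ) : EReal)}

namespace Karp

variable {V E : Type*} {src tgt : E → V}

/-- end of a walk -/
def wEnd (tgt : E → V) (u : V) (l : List E) : V := l.foldl (fun _ e => tgt e) u

@[simp] theorem wEnd_nil (u : V) : wEnd tgt u ([] : List E) = u := rfl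
@[simp] theorem wEnd_cons (u : V) (e : E) (l : List E) :
    wEnd tgt u (e :: l) = wEnd tgt (tgt e) l := rfl

theorem wEnd_append (u : V) (l1 l2 : List E) :
    wEnd tgt u (l1 ++ l2) = wEnd tgt (wEnd tgt u l1) l2 := List.foldl_append ..

theorem walkEnd_eq {u v : V} {l : List E} (h : IsWalkFrom src tgt u v l) :
    wEnd tgt u l = v := by
  induction l generalizing u with
  | nil => exact h
  | cons e l ih => exact (wEnd_cons u e l).trans (ih h.2)

theorem isWalkFrom_nil (u : V) : IsWalkFrom src tgt u u [] := rfl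

theorem walk_append {u v w : V} {l1 l2 : List E}
    (h1 : IsWalkFrom src tgt u v l1) (h2 : IsWalkFrom src tgt v w l2) :
    IsWalkFrom src tgt u w (l1 ++ l2) := by
  induction l1 generalizing u with
  | nil => cases h1; simpa using h2
  | cons e l ih => exact ⟨h1.1, ih h1.2⟩

theorem walk_split {u w : V} {l1 l2 : List E}
    (h : IsWalkFrom src tgt u w (l1 ++ l2)) :
    IsWalkFrom src tgt u (wEnd tgt u l1) l1 ∧
      IsWalkFrom src tgt (wEnd tgt u l1) w l2 := by
  induction l1 generalizing u with
  | nil => exact ⟨rfl, by simpa using h⟩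
  | cons e l ih =>
    obtain ⟨h1, h2⟩ := h
    obtain ⟨ih1, ih2⟩ := ih h2
    exact ⟨⟨h1, ih1⟩, ih2⟩

theorem get_congr {l : List E} {i j : ℕ} (hi : i < l.length) (hj : j < l.length)
    (h : i = j) : l.get ⟨i, hi⟩ = l.get ⟨j, hj⟩ := by subst h; rfl

/-- chain characterization of walks -/
theorem isWalkFrom_iff_chain {u v : V} {l : List E} :
    IsWalkFrom src tgt u v l ↔
      ((l = [] → u = v) ∧ (∀ h : l ≠ [], src (l.head h) = u) ∧
       (∀ h : l ≠ [], tgt (l.getLast h) = v) ∧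
       List.Chain' (fun a b => tgt a = src b) l) := by
  induction l generalizing u with
  | nil =>
    constructor
    · intro h; exact ⟨fun _ => h, by simp, by simp, List.isChain_nil⟩
    · intro ⟨h, _, _, _⟩; exact h rfl
  | cons e l ih =>
    simp only [IsWalkFrom, ih, List.Chain', List.isChain_cons]
    constructor
    · rintro ⟨hsrc, h0, h1, h2, h3⟩
      refine ⟨by simp, fun _ => by simpa using hsrc, fun hne => ?_, ?_, h3⟩
      · rcases eq_or_ne l [] with rfl | hl
        · simpa using h0 rfl
        · rw [List.getLast_cons hl]; exact h2 hl
      · intro y hy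
        have hl : l ≠ [] := by rintro rfl; simp at hy
        rw [List.head?_eq_head hl, Option.mem_some_iff] at hy
        subst hy
        exact (h1 hl).symm
    · rintro ⟨-, hhead, hlast, hch, h3⟩
      refine ⟨by simpa using hhead (by simp), fun hl => ?_, fun hl => ?_, fun hl => ?_, h3⟩
      · subst hl
        simpa using hlast (by simp)
      · have := hch (l.head hl) (by rw [List.head?_eq_head hl]; rfl)
        exact this.symm
      · rw [← List.getLast_cons (l := l) hl]
        exact hlast (by simp)

theorem closed_toWalk {l : List E} (h : IsClosedWalk src tgt l) :
    IsWalkFrom src tgt (src (l.head h.1)) (src (l.head h.1)) l := by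
  obtain ⟨hne, hcyc⟩ := h
  have hlen : 0 < l.length := List.length_pos_iff.2 hne
  rw [isWalkFrom_iff_chain]
  refine ⟨fun h => absurd h hne, fun _ => rfl, fun _ => ?_, ?_⟩
  · have := hcyc ⟨l.length - 1, by omega⟩
    rw [List.get_eq_getElem] at this
    rw [List.getLast_eq_getElem, this]
    congr 1
    refine (get_congr _ _ ?_).trans (List.get_mk_zero hlen)
    simp only [Nat.sub_add_cancel hlen, Nat.mod_self]
  · show List.IsChain _ l
    rw [List.isChain_iff_getElem]
    intro i hi
    have h2 := hcyc ⟨i, by omega⟩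
    change tgt (l.get ⟨i, by omega⟩) = src (l.get ⟨i + 1, by omega⟩)
    rw [h2]
    congr 1
    exact get_congr _ _ (by show (i + 1) % l.length = i + 1; exact Nat.mod_eq_of_lt (by omega))

theorem walk_toClosed {u : V} {l : List E} (hne : l ≠ [])
    (h : IsWalkFrom src tgt u u l) : IsClosedWalk src tgt l := by
  have hlen : 0 < l.length := List.length_pos_iff.2 hne
  rw [isWalkFrom_iff_chain] at h
  obtain ⟨-, hhead, hlast, hch⟩ := h
  refine ⟨hne, fun i => ?_⟩
  rcases Nat.lt_or_ge ((i : ℕ) + 1) l.length with hi | hi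
  · change List.IsChain _ l at hch
    rw [List.isChain_iff_getElem] at hch
    have this : tgt l[(i : ℕ)] = src l[(i : ℕ) + 1] := hch i (by omega)
    rw [List.get_eq_getElem, this]
    congr 1
    exact get_congr _ _ (Nat.mod_eq_of_lt hi).symm
  · have h2 : tgt (l.get i) = u := by
      rw [← hlast hne, List.getLast_eq_getElem]
      congr 1
      exact get_congr i.2 (by omega) (by omega)
    rw [h2, ← hhead hne]
    congr 1
    refine ((get_congr _ _ ?_).trans (List.get_mk_zero hlen)).symm
    have h3 : (i : ℕ) = l.length - 1 := by omega
    simp [h3, Nat.sub_add_cancel hlen, Nat.mod_self]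

section Fin
variable [Fintype V]

theorem exists_cycle_split {u v : V} {l : List E} (h : IsWalkFrom src tgt u v l)
    (hlen : Fintype.card V ≤ l.length) :
    ∃ (l1 l2 l3 : List E) (x : V), l = l1 ++ (l2 ++ l3) ∧ l2 ≠ [] ∧
      l2.length ≤ Fintype.card V ∧
      IsWalkFrom src tgt u x l1 ∧ IsWalkFrom src tgt x x l2 ∧
      IsWalkFrom src tgt x v l3 := by
  classical
  set n := Fintype.card V with hn
  obtain ⟨i, j, hne, hij⟩ := Fintype.exists_ne_map_eq_of_card_lt
    (fun i : Fin (n + 1) => wEnd tgt u (l.take i)) (by simp [hn])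
  wlog hlt : (i : ℕ) < (j : ℕ) generalizing i j
  · exact this j i hne.symm hij.symm (by omega)
  have hi : (i : ℕ) < n + 1 := i.2
  have hj : (j : ℕ) < n + 1 := j.2
  have hjlen : (j : ℕ) ≤ l.length := le_trans (by omega) hlen
  set a := l.take (i : ℕ) with ha
  set b := (l.take (j : ℕ)).drop (i : ℕ) with hb
  set c := l.drop (j : ℕ) with hc
  have ha' : (l.take (j : ℕ)).take (i : ℕ) = a := by
    rw [List.take_take, ha, Nat.min_eq_left hlt.le]
  have key1 : a ++ b = l.take (j : ℕ) := by
    rw [← ha', hb, List.take_append_drop]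
  have key2 : l = (a ++ b) ++ c := by rw [key1, hc, List.take_append_drop]
  have h' : IsWalkFrom src tgt u v ((a ++ b) ++ c) := by rw [← key2]; exact h
  have h12 := (walk_split h').1
  have hcw := (walk_split h').2
  have hend : wEnd tgt u (a ++ b) = wEnd tgt u a := by
    rw [key1, ha]; exact hij.symm
  have hab := walk_split h12
  rw [hend] at h12 hcw hab
  refine ⟨a, b, c, wEnd tgt u a, by rw [key2, List.append_assoc], ?_, ?_, hab.1, hab.2, hcw⟩
  · rw [hb, ← List.length_pos_iff, List.length_drop, List.length_take]
    omega
  · rw [hb, List.length_drop, List.length_take]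
    omega

theorem exists_short_walk {s v : V} (h : ∃ l, IsWalkFrom src tgt s v l) :
    ∃ l, IsWalkFrom src tgt s v l ∧ l.length < Fintype.card V := by
  obtain ⟨l, hl⟩ := h
  suffices key : ∀ m (l : List E), l.length ≤ m → IsWalkFrom src tgt s v l →
      ∃ l', IsWalkFrom src tgt s v l' ∧ l'.length < Fintype.card V from
    key l.length l le_rfl hl
  intro m
  induction m with
  | zero =>
    intro l hm hl
    rcases Nat.lt_or_ge l.length (Fintype.card V) with hlt | hge
    · exact ⟨l, hl, hlt⟩
    · obtain ⟨l1, l2, l3, x, heq, hne, -, h1, h2, h3⟩ := exists_cycle_split hl hge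
      have h4 : 0 < l2.length := List.length_pos_iff.2 hne
      have : l.length = l1.length + (l2.length + l3.length) := by rw [heq]; simp
      omega
  | succ m ih =>
    intro l hm hl
    rcases Nat.lt_or_ge l.length (Fintype.card V) with hlt | hge
    · exact ⟨l, hl, hlt⟩
    · obtain ⟨l1, l2, l3, x, heq, hne, -, h1, h2, h3⟩ := exists_cycle_split hl hge
      have h4 : 0 < l2.length := List.length_pos_iff.2 hne
      have hlen : l.length = l1.length + (l2.length + l3.length) := by rw [heq]; simp
      refine ih (l1 ++ l3) ?_ (walk_append h1 h3)
      simp only [List.length_append]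
      omega

theorem weight_deloop {g : E → ℝ}
    (hcyc : ∀ l, IsClosedWalk src tgt l → 0 ≤ (l.map g).sum) {s v : V} :
    ∀ l, IsWalkFrom src tgt s v l →
      ∃ l', IsWalkFrom src tgt s v l' ∧ l'.length < Fintype.card V ∧
        (l'.map g).sum ≤ (l.map g).sum := by
  suffices key : ∀ m (l : List E), l.length ≤ m → IsWalkFrom src tgt s v l →
      ∃ l', IsWalkFrom src tgt s v l' ∧ l'.length < Fintype.card V ∧
        (l'.map g).sum ≤ (l.map g).sum from
    fun l hl => key l.length l le_rfl hl
  intro m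
  induction m with
  | zero =>
    intro l hm hl
    rcases Nat.lt_or_ge l.length (Fintype.card V) with hlt | hge
    · exact ⟨l, hl, hlt, le_refl _⟩
    · obtain ⟨l1, l2, l3, x, heq, hne, -, h1, h2, h3⟩ := exists_cycle_split hl hge
      have h4 : 0 < l2.length := List.length_pos_iff.2 hne
      have : l.length = l1.length + (l2.length + l3.length) := by rw [heq]; simp
      omega
  | succ m ih =>
    intro l hm hl
    rcases Nat.lt_or_ge l.length (Fintype.card V) with hlt | hge
    · exact ⟨l, hl, hlt, le_refl _⟩
    · obtain ⟨l1, l2, l3, x, heq, hne, -, h1, h2, h3⟩ := exists_cycle_split hl hge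
      have h4 : 0 < l2.length := List.length_pos_iff.2 hne
      have hlen : l.length = l1.length + (l2.length + l3.length) := by rw [heq]; simp
      obtain ⟨l', h1', h2', h3'⟩ := ih (l1 ++ l3)
        (by simp only [List.length_append]; omega) (walk_append h1 h3)
      refine ⟨l', h1', h2', le_trans h3' ?_⟩
      have hc : 0 ≤ (l2.map g).sum := hcyc l2 (walk_toClosed hne h2)
      rw [heq]
      simp only [List.map_append, List.sum_append]
      linarith

theorem mean_lower_bound {g : E → ℝ} {r : ℝ}
    (hshort : ∀ l, IsClosedWalk src tgt l → l.length ≤ Fintype.card V →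
      r * l.length ≤ (l.map g).sum) :
    ∀ l, IsClosedWalk src tgt l → r * l.length ≤ (l.map g).sum := by
  suffices key : ∀ m (l : List E), l.length ≤ m → IsClosedWalk src tgt l →
      r * l.length ≤ (l.map g).sum from
    fun l hl => key l.length l le_rfl hl
  intro m
  induction m with
  | zero => intro l _ hl; exact hshort l hl (by omega)
  | succ m ih =>
    intro l hm hl
    rcases Nat.lt_or_ge l.length (Fintype.card V + 1) with hlt | hge
    · exact hshort l hl (by omega)
    · have hw := closed_toWalk hl
      obtain ⟨l1, l2, l3, x, heq, hne, hle, h1, h2, h3⟩ :=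
        exists_cycle_split hw (by omega)
      have h4 : 0 < l2.length := List.length_pos_iff.2 hne
      have hlen : l.length = l1.length + (l2.length + l3.length) := by rw [heq]; simp
      have h13 : IsWalkFrom src tgt (src (l.head hl.1)) (src (l.head hl.1)) (l1 ++ l3) :=
        walk_append h1 h3
      rcases Nat.eq_zero_or_pos (l1 ++ l3).length with h0 | hpos
      · -- l1 and l3 empty, so l = l2, but l2.length ≤ card V < l.length, contradiction
        simp only [List.length_append] at h0
        omega
      · have hne13 : l1 ++ l3 ≠ [] := by rw [← List.length_pos_iff]; exact hpos
        have hcl13 := walk_toClosed hne13 h13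
        have ih13 := ih (l1 ++ l3) (by simp only [List.length_append]; omega) hcl13
        have hsh := hshort l2 (walk_toClosed hne h2) hle
        rw [heq]
        simp only [List.map_append, List.sum_append, List.length_append] at *
        push_cast
        push_cast at ih13 hsh
        nlinarith [h4]

theorem exists_short_closed (h : ∃ l : List E, IsClosedWalk src tgt l) :
    ∃ l, IsClosedWalk src tgt l ∧ l.length ≤ Fintype.card V := by
  obtain ⟨l, hl⟩ := h
  rcases Nat.lt_or_ge (Fintype.card V) l.length with hlt | hge
  · obtain ⟨l1, l2, l3, x, heq, hne, hle, h1, h2, h3⟩ :=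
      exists_cycle_split (closed_toWalk hl) (by omega)
    exact ⟨l2, walk_toClosed hne h2, hle⟩
  · exact ⟨l, hl, hge⟩

end Fin

theorem reaches_exists_walk {u v : V} (h : Reaches src tgt u v) :
    ∃ l, IsWalkFrom src tgt u v l := by
  induction h with
  | refl => exact ⟨[], isWalkFrom_nil u⟩
  | tail hab hbc ih =>
    obtain ⟨l, hl⟩ := ih
    obtain ⟨e, he1, he2⟩ := hbc
    exact ⟨l ++ [e], walk_append hl ⟨he1, he2⟩⟩


section MWW
variable [Finite E] (f : E → ℝ) (s : V) (k : ℕ) (v : V)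

theorem walkSet_finite :
    {w : EReal | ∃ l : List E, IsWalkFrom src tgt s v l ∧ l.length = k ∧
      w = ((l.map f).sum : EReal)}.Finite := by
  apply Set.Finite.subset (Set.Finite.image (fun l : List E => ((l.map f).sum : EReal))
    (List.finite_length_eq E k))
  rintro w ⟨l, hw, hk, rfl⟩
  exact ⟨l, hk, rfl⟩

variable {f s k v}

theorem mww_le {l : List E} (hwalk : IsWalkFrom src tgt s v l) (hk : l.length = k) :
    minWalkWeight src tgt f s k v ≤ ((l.map f).sum : EReal) :=
  sInf_le ⟨l, hwalk, hk, rfl⟩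

theorem mww_eq_top (h : ¬ ∃ l : List E, IsWalkFrom src tgt s v l ∧ l.length = k) :
    minWalkWeight src tgt f s k v = ⊤ := by
  rw [minWalkWeight]
  convert sInf_empty
  · rfl
  rw [Set.eq_empty_iff_forall_notMem]
  rintro w ⟨l, hw, hk, rfl⟩
  exact h ⟨l, hw, hk⟩

theorem mww_ne_top {l : List E} (hwalk : IsWalkFrom src tgt s v l) (hk : l.length = k) :
    minWalkWeight src tgt f s k v ≠ ⊤ :=
  fun h => EReal.coe_ne_top _ (top_le_iff.1 (h ▸ mww_le hwalk hk))

theorem mww_attained (h : minWalkWeight src tgt f s k v ≠ ⊤) :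
    ∃ l : List E, IsWalkFrom src tgt s v l ∧ l.length = k ∧
      minWalkWeight src tgt f s k v = ((l.map f).sum : EReal) := by
  have hne : {w : EReal | ∃ l : List E, IsWalkFrom src tgt s v l ∧ l.length = k ∧
      w = ((l.map f).sum : EReal)}.Nonempty := by
    by_contra hc
    rw [Set.not_nonempty_iff_eq_empty] at hc
    exact h (by rw [minWalkWeight, hc, sInf_empty])
  have hmem := hne.csInf_mem (walkSet_finite f s k v)
  obtain ⟨l, hw, hk, heq⟩ := hmem
  exact ⟨l, hw, hk, heq⟩

end MWW

theorem sum_map_sub (f : E → ℝ) (r : ℝ) (l : List E) :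
    (l.map fun e => f e - r).sum = (l.map f).sum - l.length * r := by
  induction l with
  | nil => simp
  | cons e l ih => simp [ih]; ring

theorem walk_replicate {u : V} {C : List E} (h : IsWalkFrom src tgt u u C) (q : ℕ) :
    IsWalkFrom src tgt u u (List.replicate q C).flatten ∧
      (List.replicate q C).flatten.length = q * C.length ∧
      ∀ f : E → ℝ, ((List.replicate q C).flatten.map f).sum = q * (C.map f).sum := by
  induction q with
  | zero => exact ⟨isWalkFrom_nil u, by simp, by simp⟩
  | succ q ih =>
    rw [List.replicate_succ, List.flatten_cons]
    refine ⟨walk_append h ih.1, ?_, fun f => ?_⟩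
    · simp only [List.length_append, ih.2.1]
      ring
    · simp only [List.map_append, List.sum_append, ih.2.2 f]
      push_cast
      ring

section MCM
variable [Fintype V] [Finite E]

theorem minCycleMean_eq_top (h : ¬ ∃ l : List E, IsClosedWalk src tgt l) :
    minCycleMean src tgt f = ⊤ := by
  rw [minCycleMean]
  convert sInf_empty
  · rfl
  rw [Set.eq_empty_iff_forall_notMem]
  rintro w ⟨l, hl, rfl⟩
  exact h ⟨l, hl⟩

theorem minCycleMean_spec (f : E → ℝ) (h : ∃ l : List E, IsClosedWalk src tgt l) :
    ∃ (r : ℝ) (C : List E), IsClosedWalk src tgt C ∧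
      ((C.map f).sum / C.length : ℝ) = r ∧
      (∀ l, IsClosedWalk src tgt l → r * l.length ≤ (l.map f).sum) ∧
      minCycleMean src tgt f = (r : EReal) := by
  classical
  set S := {l : List E | IsClosedWalk src tgt l ∧ l.length ≤ Fintype.card V} with hS
  have hSfin : S.Finite :=
    Set.Finite.subset (List.finite_length_le E (Fintype.card V)) (fun l hl => hl.2)
  have hSne : S.Nonempty := exists_short_closed h
  obtain ⟨C, hCS, hCmin⟩ := Set.exists_min_image S
    (fun l => ((l.map f).sum / l.length : ℝ)) hSfin hSne
  set r : ℝ := ((C.map f).sum / C.length : ℝ) with hr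
  have hbound : ∀ l, IsClosedWalk src tgt l → r * l.length ≤ (l.map f).sum := by
    apply mean_lower_bound
    intro l hl hlen
    have hpos : (0 : ℝ) < l.length := by
      have := List.length_pos_iff.2 hl.1
      exact_mod_cast this
    have := hCmin l ⟨hl, hlen⟩
    calc r * l.length ≤ ((l.map f).sum / l.length) * l.length := by
          apply mul_le_mul_of_nonneg_right this hpos.le
      _ = (l.map f).sum := by field_simp
  refine ⟨r, C, hCS.1, rfl, hbound, ?_⟩
  apply le_antisymm
  · exact sInf_le ⟨C, hCS.1, rfl⟩
  · apply le_sInf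
    rintro w ⟨l, hl, rfl⟩
    have hpos : (0 : ℝ) < l.length := by
      have := List.length_pos_iff.2 hl.1
      exact_mod_cast this
    have := hbound l hl
    rw [EReal.coe_le_coe_iff]
    rw [le_div_iff₀ hpos]
    linarith

end MCM

end Karp

theorem term_coe (a b : ℝ) (m : ℕ) :
    ((a : EReal) - (b : EReal)) / ((m : ℕ) : EReal) = (((a - b) / (m : ℝ) : ℝ) : EReal) := by
  rw [← EReal.coe_sub, EReal.coe_div]
  norm_cast

theorem term_bot (a : ℝ) (m : ℕ) (hm : 0 < m) :
    ((a : EReal) - ⊤) / ((m : ℕ) : EReal) = ⊥ := by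
  have h1 : (a : EReal) - ⊤ = ⊥ := by simp
  rw [h1]
  exact EReal.bot_div_of_pos_ne_top (by exact_mod_cast hm) (EReal.natCast_ne_top m)

theorem term_top (b : ℝ) (m : ℕ) (hm : 0 < m) :
    ((⊤ : EReal) - (b : EReal)) / ((m : ℕ) : EReal) = ⊤ := by
  rw [EReal.top_sub_coe]
  exact EReal.top_div_of_pos_ne_top (by exact_mod_cast hm) (EReal.natCast_ne_top m)


open Karp

/-- Karp'\''s theorem: in a finite strongly connected edge-weighted digraph with
n vertices and source s, the minimum cycle mean equals
min over v of max over 0 ≤ k ≤ n-1 of (F_n(v) - F_k(v)) / (n - k). -/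
theorem karp_min_cycle_mean {V E : Type*} [Fintype V] [Fintype E] [Nonempty V]
    (src tgt : E → V) (f : E → ℝ) (s : V)
    (hconn : StronglyConnected src tgt) :
    minCycleMean src tgt f =
      ⨅ v : V, ⨆ k ∈ Finset.range (Fintype.card V),
        (minWalkWeight src tgt f s (Fintype.card V) v -
            minWalkWeight src tgt f s k v) /
          ((Fintype.card V - k : ℕ) : EReal) := by
  classical
  set n := Fintype.card V with hn
  have hn1 : 0 < n := Fintype.card_pos
  have hshortwalk : ∀ v : V, ∃ l : List E, IsWalkFrom src tgt s v l ∧ l.length < n :=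
    fun v => exists_short_walk (reaches_exists_walk (hconn s v))
  by_cases hc : ∃ l : List E, IsClosedWalk src tgt l
  case neg =>
    -- no closed walk: both sides are ⊤
    rw [minCycleMean_eq_top hc]
    symm
    rw [eq_top_iff]
    apply le_iInf
    intro v
    obtain ⟨l, hl, hk⟩ := hshortwalk v
    set k := l.length with hkdef
    have hFk : minWalkWeight src tgt f s k v ≠ ⊤ := mww_ne_top hl rfl
    obtain ⟨l', _, _, hFkeq⟩ := mww_attained hFk
    have hFn : minWalkWeight src tgt f s n v = ⊤ := by
      apply mww_eq_top
      rintro ⟨w, hw, hwlen⟩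
      obtain ⟨l1, l2, l3, x, -, hne2, -, -, h2, -⟩ :=
        exists_cycle_split hw (le_of_eq hwlen.symm)
      exact hc ⟨l2, walk_toClosed hne2 h2⟩
    apply le_iSup₂_of_le k (Finset.mem_range.2 hk)
    rw [hFn, hFkeq, term_top _ _ (by omega)]
  case pos =>
    obtain ⟨r, C0, hC0, hC0mean, hbound, hMCM⟩ := minCycleMean_spec f hc
    rw [hMCM]
    apply le_antisymm
    · -- r ≤ RHS
      apply le_iInf
      intro v
      by_cases hFn : minWalkWeight src tgt f s n v = ⊤
      · obtain ⟨l, hl, hk⟩ := hshortwalk v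
        have hFk : minWalkWeight src tgt f s l.length v ≠ ⊤ := mww_ne_top hl rfl
        obtain ⟨l', _, _, hFkeq⟩ := mww_attained hFk
        apply le_iSup₂_of_le l.length (Finset.mem_range.2 hk)
        rw [hFn, hFkeq, term_top _ _ (by omega)]
        exact le_top
      · obtain ⟨A, hAw, hAlen, hFneq⟩ := mww_attained hFn
        obtain ⟨l1, l2, l3, x, heq, hne2, hle2, h1, h2, h3⟩ :=
          exists_cycle_split hAw (le_of_eq hAlen.symm)
        have hlen2pos : 0 < l2.length := List.length_pos_iff.2 hne2
        have hlensum : n = l1.length + (l2.length + l3.length) := by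
          rw [← hAlen, heq]; simp
        set k := n - l2.length with hkdef
        have hk : k < n := by omega
        have h13 : IsWalkFrom src tgt s v (l1 ++ l3) := walk_append h1 h3
        have h13len : (l1 ++ l3).length = k := by
          simp only [List.length_append]; omega
        have hFk : minWalkWeight src tgt f s k v ≠ ⊤ := mww_ne_top h13 h13len
        obtain ⟨B, hBw, hBlen, hFkeq⟩ := mww_attained hFk
        set a := (A.map f).sum with hadef
        set b := (B.map f).sum with hbdef
        have hble : b ≤ ((l1 ++ l3).map f).sum := by
          have := mww_le h13 h13len (f := f)
          rw [hFkeq] at this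
          exact_mod_cast this
        have hcyc2 : r * l2.length ≤ (l2.map f).sum :=
          hbound l2 (walk_toClosed hne2 h2)
        have hasum : a = (l1.map f).sum + ((l2.map f).sum + (l3.map f).sum) := by
          rw [hadef, heq]; simp
        have hab : r * (l2.length : ℝ) ≤ a - b := by
          simp only [List.map_append, List.sum_append] at hble
          linarith
        apply le_iSup₂_of_le k (Finset.mem_range.2 hk)
        rw [hFneq, hFkeq, term_coe]
        rw [EReal.coe_le_coe_iff]
        have hnk : ((n - k : ℕ) : ℝ) = (l2.length : ℝ) := by
          have : n - k = l2.length := by omega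
          rw [this]
        rw [hnk, le_div_iff₀ (by exact_mod_cast hlen2pos)]
        linarith
    · -- RHS ≤ r
      set g : E → ℝ := fun e => f e - r with hg
      have hgsum : ∀ l : List E, (l.map g).sum = (l.map f).sum - l.length * r :=
        fun l => sum_map_sub f r l
      have hgcyc : ∀ l, IsClosedWalk src tgt l → 0 ≤ (l.map g).sum := by
        intro l hl
        have := hbound l hl
        rw [hgsum]
        linarith
      have hDex : ∀ v : V, ∃ P : List E, IsWalkFrom src tgt s v P ∧ P.length < n ∧
          ∀ l, IsWalkFrom src tgt s v l → ((P.map g).sum) ≤ ((l.map g).sum) := by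
        intro v
        have hfin : {l : List E | IsWalkFrom src tgt s v l ∧ l.length < n}.Finite :=
          Set.Finite.subset (List.finite_length_lt E n) (fun l hl => hl.2)
        have hne : {l : List E | IsWalkFrom src tgt s v l ∧ l.length < n}.Nonempty :=
          hshortwalk v
        obtain ⟨P, hPS, hPmin⟩ := Set.exists_min_image _
          (fun l : List E => (l.map g).sum) hfin hne
        refine ⟨P, hPS.1, hPS.2, fun l hl => ?_⟩
        obtain ⟨l', hl', hlen', hle'⟩ := weight_deloop hgcyc l hl
        exact le_trans (hPmin l' ⟨hl', hlen'⟩) hle'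
      choose P hP1 hPlen hPmin using hDex
      set D : V → ℝ := fun v => ((P v).map g).sum with hD
      -- the min mean cycle
      have hC0ne := hC0.1
      set u0 := src (C0.head hC0ne) with hu0
      have hwC0 : IsWalkFrom src tgt u0 u0 C0 := closed_toWalk hC0
      set c := C0.length with hcdef
      have hc1 : 0 < c := List.length_pos_iff.2 hC0ne
      have hC0f : (C0.map f).sum = r * c := by
        have hcr : (c : ℝ) ≠ 0 := by positivity
        field_simp at hC0mean
        linarith [hC0mean]
      have hC0g : (C0.map g).sum = 0 := by
        rw [hgsum, hC0f]; ring
      set p := (P u0).length with hpdef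
      have hpn : p < n := hPlen u0
      set m := n - p with hmdef
      set q := m / c with hqdef
      set r' := m % c with hr'def
      have hqr : c * q + r' = m := Nat.div_add_mod m c
      have hr'c : r' < c := Nat.mod_lt _ hc1
      obtain ⟨hT1w, hT1len, hT1sum⟩ := walk_replicate hwC0 q
      set T1 := (List.replicate q C0).flatten with hT1
      set T2 := C0.take r' with hT2
      have hC0split : T2 ++ C0.drop r' = C0 := List.take_append_drop r' C0
      have hsplitw : IsWalkFrom src tgt u0 u0 (T2 ++ C0.drop r') := by
        rw [hC0split]; exact hwC0
      obtain ⟨hT2w, hdropw⟩ := walk_split hsplitw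
      set u1 := wEnd tgt u0 T2 with hu1
      have hT2len : T2.length = r' := by
        rw [hT2, List.length_take]
        omega
      have hsumsplit : (T2.map g).sum + ((C0.drop r').map g).sum = 0 := by
        calc (T2.map g).sum + ((C0.drop r').map g).sum
            = ((T2 ++ C0.drop r').map g).sum := by simp
          _ = (C0.map g).sum := by rw [hC0split]
          _ = 0 := hC0g
      set Q := P u0 ++ (T1 ++ T2) with hQ
      have hQw : IsWalkFrom src tgt s u1 Q := walk_append (hP1 u0) (walk_append hT1w hT2w)
      have hQlen : Q.length = n := by
        have h1 : Q.length = p + (T1.length + T2.length) := by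
          rw [hQ]; simp [hpdef]
        rw [h1, hT1len, hT2len]
        have h2 : q * C0.length = c * q := by rw [hcdef]; ring
        omega
      have hFn : minWalkWeight src tgt f s n u1 ≠ ⊤ := mww_ne_top hQw hQlen
      obtain ⟨A, hAw, hAlen, hFneq⟩ := mww_attained hFn
      set a := (A.map f).sum with hadef
      have ha_le : a ≤ (Q.map f).sum := by
        have := mww_le hQw hQlen (f := f)
        rw [hFneq] at this
        exact_mod_cast this
      have hQg : (Q.map g).sum = D u0 + (T2.map g).sum := by
        rw [hQ]
        simp only [List.map_append, List.sum_append, hT1sum g, hC0g]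
        ring
      have hDu0 : D u0 ≤ D u1 + ((C0.drop r').map g).sum := by
        have hwalk : IsWalkFrom src tgt s u0 (P u1 ++ C0.drop r') :=
          walk_append (hP1 u1) hdropw
        have := hPmin u0 _ hwalk
        simpa [List.map_append, List.sum_append] using this
      have hQgD : (Q.map g).sum ≤ D u1 := by
        rw [hQg]
        linarith
      have key_a : a ≤ D u1 + n * r := by
        have h1 : (Q.map g).sum = (Q.map f).sum - n * r := by
          rw [hgsum, hQlen]
        linarith
      apply iInf_le_of_le u1
      apply iSup₂_le
      intro k hkmem
      have hk : k < n := Finset.mem_range.1 hkmem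
      by_cases hFk : minWalkWeight src tgt f s k u1 = ⊤
      · rw [hFneq, hFk, term_bot _ _ (by omega)]
        exact bot_le
      · obtain ⟨B, hBw, hBlen, hFkeq⟩ := mww_attained hFk
        set b := (B.map f).sum with hbdef
        have hDb : D u1 ≤ b - k * r := by
          have h := hPmin u1 B hBw
          rw [hgsum B, hBlen] at h
          exact h
        rw [hFneq, hFkeq, term_coe, EReal.coe_le_coe_iff]
        rw [div_le_iff₀ (by exact_mod_cast (by omega : 0 < n - k))]
        have hnk : ((n - k : ℕ) : ℝ) = (n : ℝ) - (k : ℝ) := by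
          push_cast [Nat.cast_sub hk.le]
          ring
        rw [hnk]
        nlinarith [key_a, hDb]
end

section
/- Let A be an identifying code in the strip S_k, let n ≥ 4, and let j ∈ ℤ. Define P = (A ∩ ({jn, …, (j+1)n − 1} × ℤ_k)) ∪ ({jn, jn+1, jn+2, jn+3} × ℤ_k), and let C be the periodic set with period n whose restriction to columns jn through (j+1)n − 1 is P. Then C is an identifying code in S_k. -/
open Filter

/-- The strip S_k: vertex set the integers times {0,...,k-1}, with edges
between vertices at Euclidean distance 1. -/
def strip (k : ℕ) : SimpleGraph (ℤ × Fin k) where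
  Adj p q := (p.1 - q.1).natAbs + ((p.2 : ℤ) - (q.2 : ℤ)).natAbs = 1
  symm := by constructor; intro p q h; (try dsimp only at h ⊢); omega
  loopless := by constructor; intro p h; (try dsimp only at h ⊢); omega

/-- The ball of radius r around the vertex (0,0), in graph distance. -/
def stripBall (k : ℕ) (hk : 0 < k) (r : ℕ) : Set (ℤ × Fin k) :=
  {p | (strip k).dist (0, ⟨0, hk⟩) p ≤ r}

/-- The density of C within the ball of radius r. -/
noncomputable def densSeq (k : ℕ) (hk : 0 < k) (C : Set (ℤ × Fin k)) (r : ℕ) :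
    ℝ :=
  ((C ∩ stripBall k hk r).ncard : ℝ) / ((stripBall k hk r).ncard : ℝ)

/-- The upper density of C in the strip S_k. -/
noncomputable def upperDensity (k : ℕ) (hk : 0 < k) (C : Set (ℤ × Fin k)) :
    ℝ :=
  limsup (densSeq k hk C) atTop

/-- The infimum density of an identifying code in S_k. -/
noncomputable def dstar (k : ℕ) (hk : 0 < k) : ℝ :=
  sInf {d : ℝ | ∃ C : Set (ℤ × Fin k),
    IsIdentifyingCode (strip k) C ∧ d = upperDensity k hk C}

/-- C is periodic with pattern length l. -/
def PeriodicWith (k : ℕ) (l : ℕ) (C : Set (ℤ × Fin k)) : Prop :=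
  ∀ p : ℤ × Fin k, p ∈ C ↔ ((p.1 + (l : ℤ), p.2) ∈ C)

lemma mem_closedNbhd_iff (k : ℕ) (w v : ℤ × Fin k) :
    w ∈ closedNbhd (strip k) v ↔
      (w = v ∨ (w.1 - v.1).natAbs + ((w.2 : ℤ) - (v.2 : ℤ)).natAbs = 1) :=
  Iff.rfl

lemma closedNbhd_shift (k : ℕ) (t a : ℤ) (b : Fin k) (c : ℤ) (d : Fin k) :
    ((a + t, b) ∈ closedNbhd (strip k) (c + t, d)) ↔
      ((a, b) ∈ closedNbhd (strip k) (c, d)) := by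
  simp only [mem_closedNbhd_iff, Prod.mk.injEq, Prod.ext_iff, Fin.ext_iff]
  omega

lemma closedNbhd_col (k : ℕ) (w : ℤ × Fin k) (c : ℤ) (d : Fin k)
    (h : w ∈ closedNbhd (strip k) (c, d)) : c - 1 ≤ w.1 ∧ w.1 ≤ c + 1 := by
  rw [mem_closedNbhd_iff] at h
  simp only [Prod.ext_iff, Fin.ext_iff] at h
  omega

def Cset (k n : ℕ) (j : ℤ) (A : Set (ℤ × Fin k)) : Set (ℤ × Fin k) :=
  {p : ℤ × Fin k | ∃ m : ℤ,
    (p.1 + m * (n : ℤ), p.2) ∈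
      (A ∩ {q : ℤ × Fin k |
          j * (n : ℤ) ≤ q.1 ∧ q.1 < (j + 1) * (n : ℤ)}) ∪
        {q : ℤ × Fin k |
          j * (n : ℤ) ≤ q.1 ∧ q.1 ≤ j * (n : ℤ) + 3}}

lemma Cset_shift (k n : ℕ) (j : ℤ) (A : Set (ℤ × Fin k)) (a : ℤ) (b : Fin k)
    (m : ℤ) :
    ((a + m * (n : ℤ), b) ∈ Cset k n j A) ↔ ((a, b) ∈ Cset k n j A) := by
  constructor
  · rintro ⟨m', hm'⟩
    refine ⟨m + m', ?_⟩
    show (a + (m + m') * (n : ℤ), b) ∈ _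
    have e : a + (m + m') * (n : ℤ) = (a + m * (n : ℤ)) + m' * (n : ℤ) := by
      ring
    rw [e]; exact hm'
  · rintro ⟨m', hm'⟩
    refine ⟨m' - m, ?_⟩
    show (a + m * (n : ℤ) + (m' - m) * (n : ℤ), b) ∈ _
    have e : a + m * (n : ℤ) + (m' - m) * (n : ℤ) = a + m' * (n : ℤ) := by ring
    rw [e]; exact hm'

lemma main_lemma (k n : ℕ) (hn : 4 ≤ n) (j : ℤ) (A : Set (ℤ × Fin k))
    (hA : IsIdentifyingCode (strip k) A) :
    IsIdentifyingCode (strip k) (Cset k n j A) := by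
  obtain ⟨hdom, hsep⟩ := hA
  have hn0 : (0 : ℤ) < (n : ℤ) := by exact_mod_cast (by omega : 0 < n)
  -- shifting a column into (j*n, j*n + n]
  have hshift : ∀ a : ℤ, ∃ m : ℤ,
      j * (n : ℤ) + 1 ≤ a + m * (n : ℤ) ∧
        a + m * (n : ℤ) ≤ j * (n : ℤ) + (n : ℤ) := by
    intro a
    have h1 := Int.mul_ediv_add_emod (j * (n : ℤ) + n - a) n
    have h2 := Int.emod_nonneg (j * (n : ℤ) + n - a) (ne_of_gt hn0)
    have h3 := Int.emod_lt_of_pos (j * (n : ℤ) + n - a) hn0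
    exact ⟨(j * (n : ℤ) + n - a) / n, by linarith, by linarith⟩
  -- A-elements with column in [j*n, (j+1)*n + 3] lie in Cset
  have hwC : ∀ w : ℤ × Fin k, w ∈ A → j * (n : ℤ) ≤ w.1 →
      w.1 ≤ (j + 1) * (n : ℤ) + 3 → w ∈ Cset k n j A := by
    intro w hwA h1 h2
    by_cases h : w.1 < (j + 1) * (n : ℤ)
    · refine ⟨0, Or.inl ⟨?_, ?_, ?_⟩⟩
      · simpa using hwA
      · simpa using h1
      · simpa using h
    · push_neg at h
      refine ⟨-1, Or.inr ⟨?_, ?_⟩⟩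
      · show j * (n : ℤ) ≤ w.1 + (-1) * (n : ℤ)
        linarith
      · show w.1 + (-1) * (n : ℤ) ≤ j * (n : ℤ) + 3
        linarith
  -- domination for Cset
  have hCdom : ∀ v : ℤ × Fin k,
      ∃ z, z ∈ closedNbhd (strip k) v ∧ z ∈ Cset k n j A := by
    intro v
    obtain ⟨m0, hs1, hs2⟩ := hshift v.1
    obtain ⟨w, hwN, hwA⟩ := hdom (v.1 + m0 * (n : ℤ), v.2)
    have hcol := closedNbhd_col k w (v.1 + m0 * (n : ℤ)) v.2 hwN
    have hwC' : w ∈ Cset k n j A :=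
      hwC w hwA (by linarith [hcol.1]) (by linarith [hcol.2])
    have e : w.1 - m0 * (n : ℤ) + m0 * (n : ℤ) = w.1 := by ring
    refine ⟨(w.1 - m0 * (n : ℤ), w.2), ?_, ?_⟩
    · exact (closedNbhd_shift k (m0 * (n : ℤ)) (w.1 - m0 * (n : ℤ)) w.2 v.1
        v.2).mp (by rw [e]; exact hwN)
    · exact (Cset_shift k n j A (w.1 - m0 * (n : ℤ)) w.2 m0).mp
        (by rw [e]; exact hwC')
  constructor
  · intro v
    obtain ⟨z, hz1, hz2⟩ := hCdom v
    exact ⟨z, hz1, hz2⟩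
  · -- separation
    have near : ∀ x y : ℤ × Fin k, x ≠ y →
        closedNbhd (strip k) x ∩ Cset k n j A =
          closedNbhd (strip k) y ∩ Cset k n j A →
        x.1 ≤ y.1 → y.1 ≤ x.1 + 2 → False := by
      intro x y hxy hEq hle1 hle2
      obtain ⟨m0, hs1, hs2⟩ := hshift x.1
      have key : ∀ a b : ℤ × Fin k,
          closedNbhd (strip k) a ∩ Cset k n j A =
            closedNbhd (strip k) b ∩ Cset k n j A →
          ∀ w : ℤ × Fin k, w ∈ A →
          w ∈ closedNbhd (strip k) (a.1 + m0 * (n : ℤ), a.2) →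
          w ∉ closedNbhd (strip k) (b.1 + m0 * (n : ℤ), b.2) →
          j * (n : ℤ) ≤ w.1 → w.1 ≤ (j + 1) * (n : ℤ) + 3 → False := by
        intro a b hab w hwA hwa hwb hb1 hb2
        have hwC' : w ∈ Cset k n j A := hwC w hwA hb1 hb2
        have e : w.1 - m0 * (n : ℤ) + m0 * (n : ℤ) = w.1 := by ring
        have hz1 : (w.1 - m0 * (n : ℤ), w.2) ∈ closedNbhd (strip k) a :=
          (closedNbhd_shift k (m0 * (n : ℤ)) (w.1 - m0 * (n : ℤ)) w.2 a.1
            a.2).mp (by rw [e]; exact hwa)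
        have hzC : (w.1 - m0 * (n : ℤ), w.2) ∈ Cset k n j A :=
          (Cset_shift k n j A (w.1 - m0 * (n : ℤ)) w.2 m0).mp
            (by rw [e]; exact hwC')
        have hz2 : (w.1 - m0 * (n : ℤ), w.2) ∈
            closedNbhd (strip k) b ∩ Cset k n j A := by
          rw [← hab]; exact ⟨hz1, hzC⟩
        apply hwb
        have h5 := (closedNbhd_shift k (m0 * (n : ℤ)) (w.1 - m0 * (n : ℤ)) w.2
          b.1 b.2).mpr hz2.1
        rw [e] at h5
        exact h5
      -- x' ≠ y'
      have hne : ((x.1 + m0 * (n : ℤ), x.2) : ℤ × Fin k) ≠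
          (y.1 + m0 * (n : ℤ), y.2) := by
        intro h
        apply hxy
        rw [Prod.mk.injEq] at h
        have h1 : x.1 = y.1 := by linarith [h.1]
        exact Prod.ext h1 h.2
      have hAne := hsep _ _ hne
      have hx : ∃ w, w ∈ A ∧
          ((w ∈ closedNbhd (strip k) (x.1 + m0 * (n : ℤ), x.2) ∧
            w ∉ closedNbhd (strip k) (y.1 + m0 * (n : ℤ), y.2)) ∨
          (w ∈ closedNbhd (strip k) (y.1 + m0 * (n : ℤ), y.2) ∧
            w ∉ closedNbhd (strip k) (x.1 + m0 * (n : ℤ), x.2))) := by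
        by_contra hc
        push_neg at hc
        apply hAne
        ext w
        simp only [Set.mem_inter_iff]
        by_cases hw : w ∈ A
        · have := hc w hw
          tauto
        · tauto
      obtain ⟨w, hwA, hcase⟩ := hx
      rcases hcase with ⟨h1, h2⟩ | ⟨h1, h2⟩
      · have hcol := closedNbhd_col k w (x.1 + m0 * (n : ℤ)) x.2 h1
        exact key x y hEq w hwA h1 h2 (by linarith [hcol.1])
          (by linarith [hcol.2])
      · have hcol := closedNbhd_col k w (y.1 + m0 * (n : ℤ)) y.2 h1
        exact key y x hEq.symm w hwA h1 h2 (by linarith [hcol.1])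
          (by linarith [hcol.2])
    intro u v huv heq
    by_cases hfar : u.1 ≤ v.1 + 2 ∧ v.1 ≤ u.1 + 2
    · rcases le_total u.1 v.1 with hle | hle
      · exact near u v huv heq hle (by omega)
      · exact near v u (Ne.symm huv) heq.symm hle (by omega)
    · obtain ⟨z, hz1, hz2⟩ := hCdom u
      have hz3 : z ∈ closedNbhd (strip k) v ∩ Cset k n j A := by
        rw [← heq]; exact ⟨hz1, hz2⟩
      have hc1 := closedNbhd_col k z u.1 u.2 hz1
      have hc2 := closedNbhd_col k z v.1 v.2 hz3.1
      omega

/-- Taking the part of an identifying code A in an n-bar, adding the first 4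
full columns of the bar, and repeating this pattern periodically yields an
identifying code in the strip. -/
theorem periodic_repetition_is_identifying (k : ℕ) (n : ℕ) (hn : 4 ≤ n)
    (j : ℤ) (A : Set (ℤ × Fin k)) (hA : IsIdentifyingCode (strip k) A) :
    IsIdentifyingCode (strip k)
      {p : ℤ × Fin k | ∃ m : ℤ,
        (p.1 + m * (n : ℤ), p.2) ∈
          (A ∩ {q : ℤ × Fin k |
              j * (n : ℤ) ≤ q.1 ∧ q.1 < (j + 1) * (n : ℤ)}) ∪
            {q : ℤ × Fin k |
              j * (n : ℤ) ≤ q.1 ∧ q.1 ≤ j * (n : ℤ) + 3}} :=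
  main_lemma k n hn j A hA
end
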